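/- Greedy forward selection on majority-voting ensembles has worst-case error rate 1/2: for every δ > 0 there exists a pool of independent classifiers with accuracies in (1/2, 1) on which the greedy forward strategy (add members only if ensemble accuracy strictly improves, starting from the most accurate member) terminates with an ensemble of accuracy at most 1/2 + δ, while some subset of the pool achieves majority-voting accuracy at least 1 − δ. -/

import Mathlib

open Finset

/-- Majority-voting ensemble accuracy of independent binary classifiers indexed by `L`
with individual accuracies `p i`. -/
noncomputable def majAcc {ι : Type*} [DecidableEq ι] (L : Finset ι) (p : ι → ℝ) : ℝ :=
  ∑ k ∈ Finset.Icc (L.card / 2 + 1) L.card,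
    ∑ I ∈ Finset.powersetCard k L, (∏ i ∈ I, p i) * ∏ j ∈ L \ I, (1 - p j)

lemma majAcc_singleton {ι : Type*} [DecidableEq ι] (a : ι) (p : ι → ℝ) :
    majAcc ({a} : Finset ι) p = p a := by
  simp [majAcc, Finset.powersetCard_one]

lemma majAcc_triple {ι : Type*} [DecidableEq ι] {a b c : ι} (hab : a ≠ b) (hac : a ≠ c)
    (hbc : b ≠ c) (p : ι → ℝ) :
    majAcc ({a, b, c} : Finset ι) p =
      p a * p b * (1 - p c) + p a * p c * (1 - p b) + p b * p c * (1 - p a)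
        + p a * p b * p c := by
  have ha : a ∉ ({b, c} : Finset ι) := by simp [hab, hac]
  have hb : b ∉ ({c} : Finset ι) := by simp [hbc]
  have hcard : ({a, b, c} : Finset ι).card = 3 := by
    rw [card_insert_of_notMem ha, card_insert_of_notMem hb, card_singleton]
  have cab : ({a, b} : Finset ι).card = 2 := by
    rw [card_insert_of_notMem (by simp [hab]), card_singleton]
  have cac : ({a, c} : Finset ι).card = 2 := by
    rw [card_insert_of_notMem (by simp [hac]), card_singleton]
  have cbc : ({b, c} : Finset ι).card = 2 := by
    rw [card_insert_of_notMem (by simp [hbc]), card_singleton]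
  have ne1 : ({a, b} : Finset ι) ≠ {a, c} := fun h => by
    have : c ∈ ({a, b} : Finset ι) := h ▸ (by simp : c ∈ ({a, c} : Finset ι))
    simp only [mem_insert, mem_singleton] at this
    rcases this with h' | h' <;> [exact hac h'.symm; exact hbc h'.symm]
  have ne2 : ({a, b} : Finset ι) ≠ {b, c} := fun h => by
    have : c ∈ ({a, b} : Finset ι) := h ▸ (by simp : c ∈ ({b, c} : Finset ι))
    simp only [mem_insert, mem_singleton] at this
    rcases this with h' | h' <;> [exact hac h'.symm; exact hbc h'.symm]
  have ne3 : ({a, c} : Finset ι) ≠ {b, c} := fun h => by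
    have : a ∈ ({b, c} : Finset ι) := h ▸ (by simp : a ∈ ({a, c} : Finset ι))
    simp only [mem_insert, mem_singleton] at this
    rcases this with h' | h' <;> [exact hab h'; exact hac h']
  have hp2 : powersetCard 2 ({a, b, c} : Finset ι) = {{a, b}, {a, c}, {b, c}} := by
    refine (eq_of_subset_of_card_le ?_ ?_).symm
    · intro I hI
      simp only [mem_insert, mem_singleton] at hI
      rcases hI with rfl | rfl | rfl <;> rw [mem_powersetCard] <;>
        refine ⟨?_, by assumption⟩ <;> intro x hx <;> simp only [mem_insert, mem_singleton] at hx ⊢ <;> tauto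
    · rw [card_powersetCard, hcard]
      rw [card_insert_of_notMem (by simp [ne1, ne2]), card_insert_of_notMem (by simp [ne3]),
        card_singleton]
      decide
  have hp3 : powersetCard 3 ({a, b, c} : Finset ι) = {({a, b, c} : Finset ι)} := by
    conv_lhs => rw [← hcard]
    exact powersetCard_self _
  have sd_ab : ({a, b, c} : Finset ι) \ {a, b} = {c} := by
    ext x
    simp only [mem_sdiff, mem_insert, mem_singleton]
    constructor
    · rintro ⟨h1 | h1 | h1, h2⟩ <;> tauto
    · rintro rfl; exact ⟨Or.inr (Or.inr rfl), by tauto⟩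
  have sd_ac : ({a, b, c} : Finset ι) \ {a, c} = {b} := by
    ext x
    simp only [mem_sdiff, mem_insert, mem_singleton]
    constructor
    · rintro ⟨h1 | h1 | h1, h2⟩ <;> tauto
    · rintro rfl; exact ⟨Or.inr (Or.inl rfl), by tauto⟩
  have sd_bc : ({a, b, c} : Finset ι) \ {b, c} = {a} := by
    ext x
    simp only [mem_sdiff, mem_insert, mem_singleton]
    constructor
    · rintro ⟨h1 | h1 | h1, h2⟩ <;> tauto
    · rintro rfl; exact ⟨Or.inl rfl, by push_neg; exact ⟨hab, hac⟩⟩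
  rw [majAcc, hcard, show (3:ℕ)/2 + 1 = 2 by norm_num,
    show Finset.Icc 2 3 = ({2, 3} : Finset ℕ) by decide,
    sum_insert (by decide), sum_singleton, hp2, hp3,
    sum_insert (by simp [ne1, ne2]), sum_insert (by simp [ne3]), sum_singleton, sum_singleton,
    sd_ab, sd_ac, sd_bc]
  rw [prod_insert (by simp [hab]), prod_insert (by simp [hac]), prod_insert (by simp [hbc]),
    prod_insert ha, prod_insert hb]
  simp only [prod_singleton, sdiff_self, bot_eq_empty, prod_empty]
  ring

lemma majAcc_const {ι : Type*} [DecidableEq ι] (L : Finset ι) (q : ℝ) (p : ι → ℝ)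
    (hp : ∀ i ∈ L, p i = q) :
    majAcc L p = ∑ k ∈ Finset.Icc (L.card / 2 + 1) L.card,
      (L.card.choose k : ℝ) * (q ^ k * (1 - q) ^ (L.card - k)) := by
  unfold majAcc
  refine sum_congr rfl fun k hk => ?_
  have : ∀ I ∈ powersetCard k L,
      (∏ i ∈ I, p i) * ∏ j ∈ L \ I, (1 - p j) = q ^ k * (1 - q) ^ (L.card - k) := by
    intro I hI
    rw [mem_powersetCard] at hI
    obtain ⟨hsub, hcard⟩ := hI
    have e1 : (∏ i ∈ I, p i) = q ^ k :=
      (prod_congr rfl fun i hi => hp i (hsub hi)).trans (by rw [prod_const, hcard])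
    have e2 : (∏ j ∈ L \ I, (1 - p j)) = (1 - q) ^ (L.card - k) :=
      (prod_congr rfl fun j hj => by rw [hp j (mem_sdiff.mp hj).1]).trans
        (by rw [prod_const, card_sdiff_of_subset hsub, hcard])
    rw [e1, e2]
  rw [sum_congr rfl this, sum_const, card_powersetCard, nsmul_eq_mul]

lemma err_bound (t : ℕ) (q : ℝ) (hq : 1/2 ≤ q) (hq1 : q ≤ 1) :
    1 - (4 * (q * (1 - q))) ^ t ≤
      ∑ k ∈ Finset.Icc (t + 1) (2 * t + 1),
        (((2 * t + 1).choose k : ℝ)) * (q ^ k * (1 - q) ^ (2 * t + 1 - k)) := by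
  set m := 2 * t + 1 with hm
  have h1q : 0 ≤ 1 - q := by linarith
  have hq0 : 0 ≤ q := by linarith
  have hbin : (∑ k ∈ range (m + 1), (m.choose k : ℝ) * (q ^ k * (1 - q) ^ (m - k))) = 1 := by
    have h := add_pow q (1 - q) m
    simp only [add_sub_cancel, one_pow] at h
    conv_rhs => rw [h]
    exact sum_congr rfl fun k _ => by ring
  have hsplit : ∑ k ∈ range (m + 1), (m.choose k : ℝ) * (q ^ k * (1 - q) ^ (m - k)) =
      (∑ k ∈ range (t + 1), (m.choose k : ℝ) * (q ^ k * (1 - q) ^ (m - k))) +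
      ∑ k ∈ Finset.Icc (t + 1) m, (m.choose k : ℝ) * (q ^ k * (1 - q) ^ (m - k)) := by
    rw [range_eq_Ico, range_eq_Ico, ← Finset.Ico_add_one_right_eq_Icc (t + 1) m]
    exact (sum_Ico_consecutive (fun k => (m.choose k : ℝ) * (q ^ k * (1 - q) ^ (m - k))) (m := 0) (n := t + 1) (k := m + 1) (by omega) (by omega)).symm
  have hterm : ∀ k ∈ range (t + 1),
      (m.choose k : ℝ) * (q ^ k * (1 - q) ^ (m - k)) ≤ (m.choose k : ℝ) * (q * (1 - q)) ^ t := by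
    intro k hk
    rw [mem_range] at hk
    refine mul_le_mul_of_nonneg_left ?_ (by positivity)
    have hmk : m - k = k + (2 * (t - k) + 1) := by omega
    rw [hmk, pow_add, ← mul_assoc, ← mul_pow, pow_add, pow_mul, pow_one]
    calc (q * (1 - q)) ^ k * (((1 - q) ^ 2) ^ (t - k) * (1 - q))
        ≤ (q * (1 - q)) ^ k * ((q * (1 - q)) ^ (t - k) * 1) := by
          refine mul_le_mul_of_nonneg_left
            (mul_le_mul ?_ (by linarith) h1q (by positivity)) (by positivity)
          exact pow_le_pow_left₀ (by positivity) (by nlinarith) _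
      _ = (q * (1 - q)) ^ t := by rw [mul_one, ← pow_add]; congr 1; omega
  have hlow : (∑ k ∈ range (t + 1), (m.choose k : ℝ) * (q ^ k * (1 - q) ^ (m - k)))
      ≤ (4 * (q * (1 - q))) ^ t := by
    calc (∑ k ∈ range (t + 1), (m.choose k : ℝ) * (q ^ k * (1 - q) ^ (m - k)))
        ≤ ∑ k ∈ range (t + 1), (m.choose k : ℝ) * (q * (1 - q)) ^ t := sum_le_sum hterm
      _ = (∑ k ∈ range (t + 1), (m.choose k : ℝ)) * (q * (1 - q)) ^ t := by rw [sum_mul]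
      _ = (4 * (q * (1 - q))) ^ t := by
          rw [← Nat.cast_sum, hm, Nat.sum_range_choose_halfway, mul_pow 4 (q * (1 - q)) t]
          norm_cast
  have h2 : (∑ k ∈ range (t + 1), (m.choose k : ℝ) * (q ^ k * (1 - q) ^ (m - k))) +
      (∑ k ∈ Finset.Icc (t + 1) m, (m.choose k : ℝ) * (q ^ k * (1 - q) ^ (m - k))) = 1 := by
    rw [← hsplit, hbin]
  linarith

/-- Greedy forward selection on majority-voting ensembles has worst-case error rate 1/2:
for every `δ > 0` there is a pool of classifiers with accuracies in `(1/2,1)` on which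
the greedy forward strategy (start from the most accurate member `i₀`; add a pair of
members only if ensemble accuracy strictly improves — here no pair improves, so it
terminates at `{i₀}`) ends with accuracy at most `1/2 + δ`, while some subset of the
pool achieves majority-voting accuracy at least `1 − δ`. -/
theorem greedy_forward_worst_case (δ : ℝ) (hδ : 0 < δ) :
    ∃ (n : ℕ) (p : Fin n → ℝ),
      (∀ i, p i ∈ Set.Ioo (1/2 : ℝ) 1) ∧
      ∃ i₀ : Fin n,
        (∀ j, p j ≤ p i₀) ∧
        (∀ j k : Fin n, j ≠ i₀ → k ≠ i₀ → j ≠ k →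
          majAcc ({i₀, j, k} : Finset (Fin n)) p ≤ majAcc ({i₀} : Finset (Fin n)) p) ∧
        majAcc ({i₀} : Finset (Fin n)) p ≤ 1/2 + δ ∧
        ∃ L : Finset (Fin n), 1 - δ ≤ majAcc L p := by
  set c : ℝ := min δ (1/4) with hcdef
  have hc : 0 < c := lt_min hδ (by norm_num)
  have hc4 : c ≤ 1/4 := min_le_right _ _
  have hcδ : c ≤ δ := min_le_left _ _
  have hr1 : 1 - c * c < 1 := by nlinarith
  obtain ⟨t, ht⟩ := exists_pow_lt_of_lt_one hδ hr1
  refine ⟨2 * t + 2, fun i => if i = ⟨0, by omega⟩ then 1/2 + c else 1/2 + c/2, ?_, ⟨0, by omega⟩, ?_, ?_, ?_, ?_⟩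
  · intro i
    constructor
    · dsimp only; split <;> linarith
    · dsimp only; split <;> linarith
  · intro j
    simp only [if_true]
    split <;> linarith
  · intro j k hj hk hjk
    have h1 : (⟨0, by omega⟩ : Fin (2 * t + 2)) ≠ j := Ne.symm hj
    have h2 : (⟨0, by omega⟩ : Fin (2 * t + 2)) ≠ k := Ne.symm hk
    rw [majAcc_triple h1 h2 hjk, majAcc_singleton]
    simp only [if_pos rfl, if_neg hj, if_neg hk, if_true]
    nlinarith [mul_pos (mul_pos hc hc) hc]
  · rw [majAcc_singleton]
    simp only [if_pos rfl, if_true]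
    linarith
  · set i₀ : Fin (2 * t + 2) := ⟨0, by omega⟩ with hi₀
    refine ⟨(univ : Finset (Fin (2 * t + 2))).erase i₀, ?_⟩
    have hLcard : ((univ : Finset (Fin (2 * t + 2))).erase i₀).card = 2 * t + 1 := by
      rw [card_erase_of_mem (mem_univ _), card_univ, Fintype.card_fin]
      omega
    have hmaj := majAcc_const ((univ : Finset (Fin (2 * t + 2))).erase i₀) (1/2 + c/2)
      (fun i => if i = i₀ then 1/2 + c else 1/2 + c/2)
      (fun i hi => if_neg (ne_of_mem_erase hi))
    rw [hmaj, hLcard, show (2 * t + 1) / 2 = t from by omega]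
    have hb := err_bound t (1/2 + c/2) (by linarith) (by linarith)
    have hqr : 4 * ((1/2 + c/2) * (1 - (1/2 + c/2))) = 1 - c * c := by ring
    rw [hqr] at hb
    linarith
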